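/- Let F : ℝ^p → ℝⁿ be continuously differentiable with Jacobian J(w) ∈ ℝ^{n×p}, and let y ∈ ℝⁿ. Fix w ∈ ℝ^p such that G = J(w) J(w)^T is invertible, and set w' = w − J(w)^T G^{-1} (F(w) − y). Then F(w') − y = (J(w) − J̄) J(w)^T G^{-1} (F(w) − y), where J̄ = ∫₀¹ J(w + s(w' − w)) ds. In particular, ‖F(w') − y‖₂ ≤ ‖J(w) − J̄‖₂ ‖J(w)^T‖₂ ‖G^{-1}‖₂ ‖F(w) − y‖₂. -/

import Mathlib

open Matrix

/-- Euclidean norm of a real vector. -/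
noncomputable def eNorm {n : Type*} [Fintype n] (v : n → ℝ) : ℝ :=
  Real.sqrt (∑ i, v i ^ 2)

/-- Spectral (ℓ²-operator) norm of a real matrix. -/
noncomputable def specNorm {m n : Type*} [Fintype m] [Fintype n] [DecidableEq n]
    (A : Matrix m n ℝ) : ℝ :=
  ‖LinearMap.toContinuousLinearMap (Matrix.toEuclideanLin A)‖

lemma eNorm_eq {n : Type*} [Fintype n] (v : n → ℝ) :
    eNorm v = ‖(WithLp.equiv 2 (n → ℝ)).symm v‖ := by
  rw [eNorm, EuclideanSpace.norm_eq]
  simp [Real.norm_eq_abs, sq_abs]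

lemma specNorm_nonneg {m n : Type*} [Fintype m] [Fintype n] [DecidableEq n]
    (A : Matrix m n ℝ) : 0 ≤ specNorm A := norm_nonneg _

lemma eNorm_nonneg {n : Type*} [Fintype n] (v : n → ℝ) : 0 ≤ eNorm v :=
  Real.sqrt_nonneg _

lemma eNorm_mulVec_le {m n : Type*} [Fintype m] [Fintype n] [DecidableEq n]
    (A : Matrix m n ℝ) (v : n → ℝ) :
    eNorm (A.mulVec v) ≤ specNorm A * eNorm v := by
  rw [eNorm_eq, eNorm_eq]
  have h : (WithLp.equiv 2 (m → ℝ)).symm (A.mulVec v) =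
      LinearMap.toContinuousLinearMap (Matrix.toEuclideanLin A)
        ((WithLp.equiv 2 (n → ℝ)).symm v) := by
    simp [Matrix.toEuclideanLin, Matrix.toLin'_apply]
  rw [h]
  exact (LinearMap.toContinuousLinearMap (Matrix.toEuclideanLin A)).le_opNorm _

lemma ftc_segment {p n : ℕ}
    (F : (Fin p → ℝ) → Fin n → ℝ) (hF : ContDiff ℝ 1 F)
    (J : (Fin p → ℝ) → Matrix (Fin n) (Fin p) ℝ)
    (hJ : ∀ (w : Fin p → ℝ) (v : Fin p → ℝ), fderiv ℝ F w v = (J w).mulVec v)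
    (w w' : Fin p → ℝ)
    (Jbar : Matrix (Fin n) (Fin p) ℝ)
    (hJbar : ∀ i j, Jbar i j = ∫ s in (0:ℝ)..1, J (w + s • (w' - w)) i j) :
    F w' - F w = Jbar.mulVec (w' - w) := by
  set d := w' - w with hd
  set γ : ℝ → Fin p → ℝ := fun s => w + s • d with hγ
  have hγd : ∀ s : ℝ, HasDerivAt γ d s := fun s => by
    have h := ((hasDerivAt_id s).smul_const d).const_add w
    rw [one_smul] at h
    exact h
  have hJc : ∀ i j, Continuous fun u => J u i j := by
    intro i j
    have h1 : Continuous fun u => fderiv ℝ F u := hF.continuous_fderiv one_ne_zero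
    have h2 : Continuous fun u => fderiv ℝ F u (Pi.single j 1) i :=
      (continuous_apply i).comp
        ((ContinuousLinearMap.apply ℝ (Fin n → ℝ) (Pi.single j 1)).continuous.comp h1)
    have : (fun u => fderiv ℝ F u (Pi.single j 1) i) = fun u => J u i j := by
      funext u
      rw [hJ]
      simp [Matrix.mulVec_single]
    rwa [this] at h2
  have hderiv : ∀ i (s : ℝ), HasDerivAt (fun t => F (γ t) i) ((J (γ s)).mulVec d i) s := by
    intro i s
    have hFd : HasFDerivAt F (fderiv ℝ F (γ s)) (γ s) :=
      (hF.differentiable one_ne_zero (γ s)).hasFDerivAt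
    have := hFd.comp_hasDerivAt s (hγd s)
    rw [hJ] at this
    exact hasDerivAt_pi.mp this i
  funext i
  have hcont : Continuous fun s => (J (γ s)).mulVec d i := by
    have : (fun s => (J (γ s)).mulVec d i) = fun s => ∑ j, J (γ s) i j * d j := by
      funext s; rfl
    rw [this]
    exact continuous_finset_sum _ fun j _ =>
      ((hJc i j).comp (by fun_prop)).mul continuous_const
  have hint : IntervalIntegrable (fun s => (J (γ s)).mulVec d i) MeasureTheory.volume 0 1 :=
    hcont.intervalIntegrable 0 1
  have hftc := intervalIntegral.integral_eq_sub_of_hasDerivAt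
    (f := fun t => F (γ t) i) (fun s _ => hderiv i s) hint
  have hγ0 : γ 0 = w := by simp [hγ]
  have hγ1 : γ 1 = w' := by simp [hγ, hd]
  simp only [hγ0, hγ1] at hftc
  have : (F w' - F w) i = F w' i - F w i := rfl
  rw [this, ← hftc]
  have hsum : (fun s => (J (γ s)).mulVec d i) = fun s => ∑ j, J (γ s) i j * d j := by
    funext s; rfl
  have hcj : ∀ j, Continuous fun s => J (γ s) i j * d j := fun j => by
    exact ((hJc i j).comp (by fun_prop : Continuous γ)).mul continuous_const
  rw [hsum, intervalIntegral.integral_finset_sum (fun j _ => (hcj j).intervalIntegrable 0 1)]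
  have : Jbar.mulVec d i = ∑ j, Jbar i j * d j := rfl
  rw [this]
  congr 1
  funext j
  rw [hJbar i j, ← intervalIntegral.integral_mul_const]

/-- One-step error identity for the full-batch Gram-Gauss-Newton update:
if `w' = w − J(w)ᵀ G⁻¹ (F(w) − y)` with `G = J(w)J(w)ᵀ` invertible, then
`F(w') − y = (J(w) − J̄) J(w)ᵀ G⁻¹ (F(w) − y)` where `J̄ = ∫₀¹ J(w + s(w'−w)) ds`,
and hence `‖F(w') − y‖₂ ≤ ‖J(w) − J̄‖₂ ‖J(w)ᵀ‖₂ ‖G⁻¹‖₂ ‖F(w) − y‖₂`. -/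
theorem ggn_one_step_error_identity {p n : ℕ}
    (F : (Fin p → ℝ) → Fin n → ℝ) (hF : ContDiff ℝ 1 F)
    (J : (Fin p → ℝ) → Matrix (Fin n) (Fin p) ℝ)
    (hJ : ∀ (w : Fin p → ℝ) (v : Fin p → ℝ), fderiv ℝ F w v = (J w).mulVec v)
    (y : Fin n → ℝ) (w : Fin p → ℝ)
    (G : Matrix (Fin n) (Fin n) ℝ) (hG : G = J w * (J w)ᵀ)
    (hGunit : IsUnit G)
    (w' : Fin p → ℝ)
    (hw' : w' = w - (J w)ᵀ.mulVec (G⁻¹.mulVec (F w - y)))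
    (Jbar : Matrix (Fin n) (Fin p) ℝ)
    (hJbar : ∀ i j, Jbar i j = ∫ s in (0:ℝ)..1, J (w + s • (w' - w)) i j) :
    F w' - y = (J w - Jbar).mulVec ((J w)ᵀ.mulVec (G⁻¹.mulVec (F w - y))) ∧
    eNorm (F w' - y) ≤
      specNorm (J w - Jbar) * specNorm (J w)ᵀ * specNorm G⁻¹ * eNorm (F w - y) := by
  set r : Fin n → ℝ := F w - y with hr
  set u : Fin p → ℝ := (J w)ᵀ.mulVec (G⁻¹.mulVec r) with hu
  have hdu : w' - w = -u := by rw [hw']; abel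
  have hftc : F w' - F w = Jbar.mulVec (w' - w) :=
    ftc_segment F hF J hJ w w' Jbar hJbar
  have hJu : (J w).mulVec u = r := by
    rw [hu, Matrix.mulVec_mulVec, Matrix.mulVec_mulVec, ← hG,
      Matrix.mul_nonsing_inv G ((Matrix.isUnit_iff_isUnit_det G).mp hGunit)]
    simp
  have hid : F w' - y = (J w - Jbar).mulVec u := by
    have h1 : F w' - y = r + (F w' - F w) := by rw [hr]; abel
    rw [h1, hftc, hdu, Matrix.sub_mulVec, hJu, Matrix.mulVec_neg]
    abel
  refine ⟨hid, ?_⟩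
  rw [hid]
  calc eNorm ((J w - Jbar).mulVec u)
      ≤ specNorm (J w - Jbar) * eNorm u := eNorm_mulVec_le _ _
    _ ≤ specNorm (J w - Jbar) * (specNorm (J w)ᵀ * eNorm (G⁻¹.mulVec r)) := by
        apply mul_le_mul_of_nonneg_left (eNorm_mulVec_le _ _) (specNorm_nonneg _)
    _ ≤ specNorm (J w - Jbar) * (specNorm (J w)ᵀ * (specNorm G⁻¹ * eNorm r)) := by
        apply mul_le_mul_of_nonneg_left _ (specNorm_nonneg _)
        exact mul_le_mul_of_nonneg_left (eNorm_mulVec_le _ _) (specNorm_nonneg _)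
    _ = specNorm (J w - Jbar) * specNorm (J w)ᵀ * specNorm G⁻¹ * eNorm r := by ring
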